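/- arXiv:1509.01676 — 5 statements merged into one kernel-verified Lean document; each statement's English description precedes it below -/
import Mathlib

section
/- If f: [0,1] → ℝ⁺ is decreasing and twice continuously differentiable, a, b > 0, and f''(x)·(f(x)+b) ≥ 2·(f'(x))² for all x ∈ (0,1), then the function t(x) = 1 - a·(1-x)·f(x)/(f(x)+b) is concave on (0,1). -/
theorem stmt_0 (f : ℝ → ℝ) (a b : ℝ) (ha : 0 < a) (hb : 0 < b)
    (hpos : ∀ x ∈ Set.Icc (0:ℝ) 1, 0 < f x)
    (hanti : AntitoneOn f (Set.Icc (0:ℝ) 1))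
    (hC2 : ContDiffOn ℝ 2 f (Set.Icc (0:ℝ) 1))
    (hcond : ∀ x ∈ Set.Ioo (0:ℝ) 1,
      deriv (deriv f) x * (f x + b) ≥ 2 * (deriv f x) ^ 2) :
    ConcaveOn ℝ (Set.Ioo (0:ℝ) 1)
      (fun x => 1 - a * (1 - x) * (f x / (f x + b))) := by
  have hIccmem : ∀ x ∈ Set.Ioo (0:ℝ) 1, Set.Icc (0:ℝ) 1 ∈ nhds x := by
    intro x hx
    exact Icc_mem_nhds hx.1 hx.2
  have hsub : Set.Ioo (0:ℝ) 1 ⊆ Set.Icc (0:ℝ) 1 := Set.Ioo_subset_Icc_self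
  -- basic positivity
  have hA : ∀ x ∈ Set.Ioo (0:ℝ) 1, 0 < f x + b := fun x hx => by
    have := hpos x (hsub hx); linarith
  have hAne : ∀ x ∈ Set.Ioo (0:ℝ) 1, f x + b ≠ 0 := fun x hx => (hA x hx).ne'
  -- f is differentiable at points of Ioo
  have hdf : ∀ x ∈ Set.Ioo (0:ℝ) 1, HasDerivAt f (deriv f x) x := by
    intro x hx
    have h1 : DifferentiableWithinAt ℝ f (Set.Icc (0:ℝ) 1) x :=
      (hC2.differentiableOn (by norm_num)) x (hsub hx)
    exact (h1.differentiableAt (hIccmem x hx)).hasDerivAt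
  -- deriv f is differentiable at points of Ioo
  have hC2' : ContDiffOn ℝ 2 f (Set.Ioo (0:ℝ) 1) := hC2.mono hsub
  have hCd : ContDiffOn ℝ 1 (deriv f) (Set.Ioo (0:ℝ) 1) :=
    hC2'.deriv_of_isOpen isOpen_Ioo (by norm_num)
  have hdf' : ∀ x ∈ Set.Ioo (0:ℝ) 1, HasDerivAt (deriv f) (deriv (deriv f) x) x := by
    intro x hx
    have h1 : DifferentiableWithinAt ℝ (deriv f) (Set.Ioo (0:ℝ) 1) x :=
      (hCd.differentiableOn (by norm_num)) x hx
    exact (h1.differentiableAt (isOpen_Ioo.mem_nhds hx)).hasDerivAt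
  -- deriv f ≤ 0 on Ioo from antitonicity
  have hderiv_nonpos : ∀ x ∈ Set.Ioo (0:ℝ) 1, deriv f x ≤ 0 := by
    intro x hx
    have hslope : Filter.Tendsto (slope f x) (nhdsWithin x {x}ᶜ) (nhds (deriv f x)) :=
      hasDerivAt_iff_tendsto_slope.1 (hdf x hx)
    have hmono : nhdsWithin x (Set.Ioo x 1) ≤ nhdsWithin x {x}ᶜ := by
      apply nhdsWithin_mono
      intro y hy
      exact fun h => (lt_irrefl x) (h ▸ hy.1)
    have hne : (nhdsWithin x (Set.Ioo x 1)).NeBot := by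
      apply IsGLB.nhdsWithin_neBot (isGLB_Ioo hx.2)
      exact Set.nonempty_Ioo.2 hx.2
    refine le_of_tendsto (hslope.mono_left hmono) ?_
    filter_upwards [self_mem_nhdsWithin] with y hy
    have hyI : y ∈ Set.Icc (0:ℝ) 1 := ⟨le_of_lt (lt_trans hx.1 hy.1), le_of_lt hy.2⟩
    have hfle : f y ≤ f x := hanti (hsub hx) hyI (le_of_lt hy.1)
    rw [slope_def_field]
    apply div_nonpos_of_nonpos_of_nonneg <;> linarith [hy.1]
  -- explicit first and second derivatives
  set T' : ℝ → ℝ := fun x =>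
    a * (f x / (f x + b)) - a * (1 - x) * (b * deriv f x / (f x + b) ^ 2) with hT'
  set T'' : ℝ → ℝ := fun x =>
    2 * a * (b * deriv f x / (f x + b) ^ 2) -
      a * (1 - x) *
        (b * (deriv (deriv f) x * (f x + b) - 2 * (deriv f x) ^ 2) / (f x + b) ^ 3) with hT''
  have hd1 : ∀ x ∈ Set.Ioo (0:ℝ) 1,
      HasDerivAt (fun y => 1 - a * (1 - y) * (f y / (f y + b))) (T' x) x := by
    intro x hx
    have hfd := hdf x hx
    have hne := hAne x hx
    have hg : HasDerivAt (fun y => f y / (f y + b))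
        ((deriv f x * (f x + b) - f x * deriv f x) / (f x + b) ^ 2) x :=
      hfd.div (hfd.add_const b) hne
    have hlin : HasDerivAt (fun y : ℝ => a * (1 - y)) (a * (-1)) x :=
      ((hasDerivAt_id x).const_sub 1).const_mul a
    have hprod := hlin.fun_mul hg
    have ht := hprod.const_sub 1
    refine ht.congr_deriv ?_
    simp only [hT']
    field_simp
    ring
  have hd2 : ∀ x ∈ Set.Ioo (0:ℝ) 1, HasDerivAt T' (T'' x) x := by
    intro x hx
    have hfd := hdf x hx
    have hfd' := hdf' x hx
    have hne := hAne x hx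
    have hne2 : (f x + b) ^ 2 ≠ 0 := pow_ne_zero 2 hne
    have hg : HasDerivAt (fun y => f y / (f y + b))
        ((deriv f x * (f x + b) - f x * deriv f x) / (f x + b) ^ 2) x :=
      hfd.div (hfd.add_const b) hne
    have h1 : HasDerivAt (fun y => a * (f y / (f y + b)))
        (a * ((deriv f x * (f x + b) - f x * deriv f x) / (f x + b) ^ 2)) x :=
      hg.const_mul a
    have hnum : HasDerivAt (fun y => b * deriv f y) (b * deriv (deriv f) x) x :=
      hfd'.const_mul b
    have hden : HasDerivAt (fun y => (f y + b) ^ 2)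
        (2 * (f x + b) ^ 1 * deriv f x) x := by
      simpa using (hfd.add_const b).fun_pow 2
    have hq : HasDerivAt (fun y => b * deriv f y / (f y + b) ^ 2)
        ((b * deriv (deriv f) x * (f x + b) ^ 2 -
          b * deriv f x * (2 * (f x + b) ^ 1 * deriv f x)) / ((f x + b) ^ 2) ^ 2) x :=
      hnum.div hden hne2
    have hlin : HasDerivAt (fun y : ℝ => a * (1 - y)) (a * (-1)) x :=
      ((hasDerivAt_id x).const_sub 1).const_mul a
    have hprod := hlin.fun_mul hq
    have ht := h1.sub hprod
    refine ht.congr_deriv ?_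
    simp only [hT'']
    field_simp
    ring
  -- nonpositivity of the second derivative
  have hT''_nonpos : ∀ x ∈ Set.Ioo (0:ℝ) 1, T'' x ≤ 0 := by
    intro x hx
    have hA' := hA x hx
    have hf' := hderiv_nonpos x hx
    have hc := hcond x hx
    have h1 : 2 * a * (b * deriv f x / (f x + b) ^ 2) ≤ 0 := by
      apply mul_nonpos_of_nonneg_of_nonpos (by positivity)
      apply div_nonpos_of_nonpos_of_nonneg
      · exact mul_nonpos_of_nonneg_of_nonpos hb.le hf'
      · positivity
    have h2 : 0 ≤ a * (1 - x) *
        (b * (deriv (deriv f) x * (f x + b) - 2 * (deriv f x) ^ 2) / (f x + b) ^ 3) := by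
      have h1x : (0:ℝ) ≤ 1 - x := by linarith [hx.2]
      have hnn : 0 ≤ deriv (deriv f) x * (f x + b) - 2 * (deriv f x) ^ 2 := by linarith
      have : 0 ≤ b * (deriv (deriv f) x * (f x + b) - 2 * (deriv f x) ^ 2) / (f x + b) ^ 3 := by
        apply div_nonneg (mul_nonneg hb.le hnn) (by positivity)
      exact mul_nonneg (mul_nonneg ha.le h1x) this
    simp only [hT'']
    linarith
  -- apply the concavity criterion
  have hint : interior (Set.Ioo (0:ℝ) 1) = Set.Ioo (0:ℝ) 1 := isOpen_Ioo.interior_eq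
  refine concaveOn_of_hasDerivWithinAt2_nonpos (f' := T') (f'' := T'') (convex_Ioo 0 1) ?_ ?_ ?_ ?_
  · intro x hx
    exact ((hd1 x hx).differentiableAt.continuousAt).continuousWithinAt
  · intro x hx
    rw [hint] at hx ⊢
    exact (hd1 x hx).hasDerivWithinAt
  · intro x hx
    rw [hint] at hx ⊢
    exact (hd2 x hx).hasDerivWithinAt
  · intro x hx
    rw [hint] at hx
    exact hT''_nonpos x hx
end

section
/- For every μ > 0, T_s > 0, T_w > 0, and ρ ∈ (0,1), the function f(ρ) = e^{-μρT_s}/(μρ) satisfies f''(ρ)·(f(ρ) + T_s + T_w) > 2·(f'(ρ))². -/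
theorem stmt_3 (μ Ts Tw : ℝ) (hμ : 0 < μ) (hTs : 0 < Ts) (hTw : 0 < Tw)
    (ρ : ℝ) (hρ : ρ ∈ Set.Ioo (0:ℝ) 1) :
    let f : ℝ → ℝ := fun r => Real.exp (-(μ * r * Ts)) / (μ * r)
    deriv (deriv f) ρ * (f ρ + Ts + Tw) > 2 * (deriv f ρ) ^ 2 := by
  intro f
  obtain ⟨hρ0, hρ1⟩ := hρ
  have hρne : ρ ≠ 0 := ne_of_gt hρ0
  have hμρ : μ * ρ ≠ 0 := mul_ne_zero (ne_of_gt hμ) hρne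
  set g : ℝ → ℝ := fun r =>
    (Real.exp (-(μ * r * Ts)) * -(μ * Ts) * (μ * r) - Real.exp (-(μ * r * Ts)) * μ) /
      (μ * r) ^ 2 with hgdef
  have hg : ∀ r : ℝ, r ≠ 0 → HasDerivAt f (g r) r := by
    intro r hr
    have hlin : HasDerivAt (fun x : ℝ => -(μ * x * Ts)) (-(μ * Ts)) r := by
      simpa using (((hasDerivAt_id r).const_mul μ).mul_const Ts).fun_neg
    have hexp := hlin.exp
    have hden : HasDerivAt (fun x : ℝ => μ * x) μ r := by
      simpa using (hasDerivAt_id r).const_mul μ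
    have := hexp.fun_div hden (mul_ne_zero (ne_of_gt hμ) hr)
    simpa [hgdef] using this
  have hdf : deriv f =ᶠ[nhds ρ] g := by
    filter_upwards [isOpen_compl_singleton.mem_nhds
      (by simpa using hρne : ρ ∈ ({0}ᶜ : Set ℝ))] with r hr
    exact (hg r hr).deriv
  -- second derivative of f at ρ
  have hlin : HasDerivAt (fun x : ℝ => -(μ * x * Ts)) (-(μ * Ts)) ρ := by
    simpa using (((hasDerivAt_id ρ).const_mul μ).mul_const Ts).fun_neg
  have hexp := hlin.exp
  have hden : HasDerivAt (fun x : ℝ => μ * x) μ ρ := by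
    simpa using (hasDerivAt_id ρ).const_mul μ
  have hN : HasDerivAt
      (fun r => Real.exp (-(μ * r * Ts)) * -(μ * Ts) * (μ * r) - Real.exp (-(μ * r * Ts)) * μ)
      ((Real.exp (-(μ * ρ * Ts)) * -(μ * Ts) * -(μ * Ts)) * (μ * ρ) +
        Real.exp (-(μ * ρ * Ts)) * -(μ * Ts) * μ -
        (Real.exp (-(μ * ρ * Ts)) * -(μ * Ts)) * μ) ρ :=
    ((hexp.mul_const (-(μ * Ts))).mul hden).sub (hexp.mul_const μ)
  have hD : HasDerivAt (fun r : ℝ => (μ * r) ^ 2) (2 * (μ * ρ) ^ 1 * μ) ρ := hden.pow 2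
  have hg2 := hN.fun_div hD (pow_ne_zero 2 hμρ)
  have h1 : deriv f ρ = g ρ := (hg ρ hρne).deriv
  have h2 : deriv (deriv f) ρ = deriv g ρ := hdf.deriv_eq
  rw [h2, hg2.deriv, h1]
  -- clean formulas
  set E := Real.exp (-(μ * ρ * Ts)) with hE
  have hEpos : 0 < E := Real.exp_pos _
  have hE1 : E < 1 := Real.exp_lt_one_iff.mpr (by nlinarith [mul_pos (mul_pos hμ hρ0) hTs])
  have hfρ : f ρ = E / (μ * ρ) := rfl
  rw [hfρ, hgdef]
  have hu : 0 < μ * Ts * ρ := by positivity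
  set u := μ * Ts * ρ with hudef
  have key1 : (E * -(μ * Ts) * (μ * ρ) - E * μ) / (μ * ρ) ^ 2 = -(E * (u + 1)) / (μ * ρ ^ 2) := by
    rw [hudef, div_eq_div_iff (by positivity) (by positivity)]
    ring
  have key2 : ((E * -(μ * Ts) * -(μ * Ts)) * (μ * ρ) + E * -(μ * Ts) * μ -
        (E * -(μ * Ts)) * μ) * (μ * ρ) ^ 2 -
        (E * -(μ * Ts) * (μ * ρ) - E * μ) * (2 * (μ * ρ) ^ 1 * μ) =
      E * (u ^ 2 + 2 * u + 2) * μ ^ 3 * ρ := by ring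
  simp only [key1]
  rw [key2]
  rw [gt_iff_lt, show (((μ * ρ) ^ 2) ^ 2 : ℝ) = μ ^ 4 * ρ ^ 4 by ring]
  have hgoal : E * (u ^ 2 + 2 * u + 2) * μ ^ 3 * ρ / (μ ^ 4 * ρ ^ 4) *
      (E / (μ * ρ) + Ts + Tw) - 2 * (-(E * (u + 1)) / (μ * ρ ^ 2)) ^ 2 =
      E * ((u + μ * ρ * Tw) * (u ^ 2 + 2 * u + 2) - E * (u ^ 2 + 2 * u)) / (μ ^ 2 * ρ ^ 4) := by
    rw [hudef]
    field_simp
    ring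
  have hpos : 0 < E * ((u + μ * ρ * Tw) * (u ^ 2 + 2 * u + 2) - E * (u ^ 2 + 2 * u)) /
      (μ ^ 2 * ρ ^ 4) := by
    apply div_pos _ (by positivity)
    apply mul_pos hEpos
    nlinarith [mul_pos hu (by linarith : (0:ℝ) < u + 2), mul_pos (mul_pos hμ hρ0) hTw]
  simp only [← hE, key1]
  linarith [hgoal ▸ hpos]
end

section
/- For every μ > 0, T_s > 0, T_w > 0, T_max ≥ 0, and ρ ∈ (0,1), the function f(ρ) = 1/(μρ) + T_max - T_s satisfies f''(ρ)·(f(ρ) + T_s + T_w) > 2·(f'(ρ))². -/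
theorem stmt_6 (μ Ts Tw Tmax : ℝ) (hμ : 0 < μ) (hTs : 0 < Ts) (hTw : 0 < Tw)
    (hTmax : 0 ≤ Tmax) (ρ : ℝ) (hρ : ρ ∈ Set.Ioo (0:ℝ) 1) :
    let f : ℝ → ℝ := fun r => 1 / (μ * r) + Tmax - Ts
    deriv (deriv f) ρ * (f ρ + Ts + Tw) > 2 * (deriv f ρ) ^ 2 := by
  intro f
  obtain ⟨hρ0, hρ1⟩ := hρ
  have hρne : ρ ≠ 0 := ne_of_gt hρ0
  have hμne : μ ≠ 0 := ne_of_gt hμ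
  have h1 : ∀ r : ℝ, r ≠ 0 → HasDerivAt f (μ⁻¹ * -(r ^ 2)⁻¹) r := by
    intro r hr
    have h := ((hasDerivAt_inv hr).const_mul μ⁻¹).add_const Tmax
    have h2 := h.sub_const Ts
    have hf : f = fun x => μ⁻¹ * x⁻¹ + Tmax - Ts := by
      funext x; simp only [f, one_div, mul_inv]
    rw [hf]; exact h2
  have hd1 : ∀ r : ℝ, r ≠ 0 → deriv f r = μ⁻¹ * -(r ^ 2)⁻¹ := fun r hr =>
    (h1 r hr).deriv
  -- deriv f eventually equals g near ρ
  have hev : deriv f =ᶠ[nhds ρ] (fun r => μ⁻¹ * -(r ^ 2)⁻¹) := by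
    filter_upwards [eventually_ne_nhds hρne] with r hr using hd1 r hr
  have hg : HasDerivAt (fun r : ℝ => μ⁻¹ * -(r ^ 2)⁻¹) (μ⁻¹ * (2 * ρ / ρ ^ 4)) ρ := by
    have hp : HasDerivAt (fun r : ℝ => r ^ 2) (2 * ρ) ρ := by
      simpa using hasDerivAt_pow 2 ρ
    have hρ2 : ρ ^ 2 ≠ 0 := pow_ne_zero 2 hρne
    have := (hp.inv hρ2).neg.const_mul (μ⁻¹)
    refine HasDerivAt.congr_deriv this ?_
    ring
  have hd2 : deriv (deriv f) ρ = μ⁻¹ * (2 * ρ / ρ ^ 4) := by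
    rw [hev.deriv_eq]
    exact hg.deriv
  rw [hd2, hd1 ρ hρne]
  show μ⁻¹ * (2 * ρ / ρ ^ 4) * (1 / (μ * ρ) + Tmax - Ts + Ts + Tw) >
    2 * (μ⁻¹ * -(ρ ^ 2)⁻¹) ^ 2
  have key : μ⁻¹ * (2 * ρ / ρ ^ 4) * (1 / (μ * ρ) + Tmax + Tw) -
      2 * (μ⁻¹ * -(ρ ^ 2)⁻¹) ^ 2 = 2 * (Tmax + Tw) / (μ * ρ ^ 3) := by
    field_simp
    ring
  have hpos : 0 < 2 * (Tmax + Tw) / (μ * ρ ^ 3) := by positivity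
  nlinarith [key, hpos]
end

section
/- Let Q ≥ 1 be a natural number and T_s, T_w, μ, ρ > 0, and set x = μρT_s. Then T_s·x^Q·(μρ·((T_s+T_w)Γ(Q) - T_s·Γ(Q,x)) + Γ(Q+1,x)) + Γ(Q+1,x)·((T_s+T_w)Γ(Q) - T_s·Γ(Q,x)) > 0. -/
/-- The upper incomplete Gamma function `Γ(Q, x) = ∫_x^∞ t^(Q-1) e^(-t) dt`
for a natural number argument `Q`. -/
noncomputable def upperGamma (Q : ℕ) (x : ℝ) : ℝ :=
  ∫ t in Set.Ioi x, t ^ (Q - 1) * Real.exp (-t)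

lemma upperGamma_eq (Q : ℕ) (hQ : 1 ≤ Q) (x : ℝ) (hx : 0 ≤ x) :
    upperGamma Q x = ∫ t in Set.Ioi x, Real.exp (-t) * t ^ ((Q : ℝ) - 1) := by
  refine MeasureTheory.setIntegral_congr_fun measurableSet_Ioi (fun t ht => ?_)
  have ht0 : 0 < t := lt_of_le_of_lt hx ht
  have h : ((Q : ℝ) - 1) = ((Q - 1 : ℕ) : ℝ) := by
    rw [Nat.cast_sub hQ]; simp
  rw [h, Real.rpow_natCast, mul_comm]

lemma upperGamma_integrable (Q : ℕ) (hQ : 1 ≤ Q) (x : ℝ) (hx : 0 ≤ x) :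
    MeasureTheory.IntegrableOn (fun t => Real.exp (-t) * t ^ ((Q : ℝ) - 1))
      (Set.Ioi x) MeasureTheory.volume :=
  (Real.GammaIntegral_convergent (by exact_mod_cast hQ : (0:ℝ) < Q)).mono_set
    (Set.Ioi_subset_Ioi hx)

lemma upperGamma_pos (Q : ℕ) (hQ : 1 ≤ Q) (x : ℝ) (hx : 0 ≤ x) :
    0 < upperGamma Q x := by
  rw [upperGamma_eq Q hQ x hx]
  have hnn : 0 ≤ᵐ[MeasureTheory.volume.restrict (Set.Ioi x)]
      (fun t => Real.exp (-t) * t ^ ((Q : ℝ) - 1)) := by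
    filter_upwards [MeasureTheory.ae_restrict_mem measurableSet_Ioi] with t ht
    have ht0 : 0 < t := lt_of_le_of_lt hx ht
    positivity
  rw [MeasureTheory.setIntegral_pos_iff_support_of_nonneg_ae hnn
    (upperGamma_integrable Q hQ x hx)]
  have hsub : Set.Ioi x ⊆ Function.support (fun t => Real.exp (-t) * t ^ ((Q : ℝ) - 1)) ∩ Set.Ioi x := by
    intro t ht
    refine ⟨?_, ht⟩
    have ht0 : 0 < t := lt_of_le_of_lt hx ht
    simp only [Function.mem_support]
    positivity
  calc (0 : ENNReal) < MeasureTheory.volume (Set.Ioi x) := by simp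
    _ ≤ _ := MeasureTheory.measure_mono hsub

lemma upperGamma_le_Gamma (Q : ℕ) (hQ : 1 ≤ Q) (x : ℝ) (hx : 0 ≤ x) :
    upperGamma Q x ≤ Real.Gamma Q := by
  rw [upperGamma_eq Q hQ x hx,
    Real.Gamma_eq_integral (by exact_mod_cast hQ : (0:ℝ) < Q)]
  refine MeasureTheory.setIntegral_mono_set
    (Real.GammaIntegral_convergent (by exact_mod_cast hQ : (0:ℝ) < Q)) ?_ ?_
  · filter_upwards [MeasureTheory.ae_restrict_mem measurableSet_Ioi] with t ht
    have ht0 : 0 < t := ht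
    positivity
  · exact Filter.Eventually.of_forall (Set.Ioi_subset_Ioi hx)

theorem stmt_9 (Q : ℕ) (hQ : 1 ≤ Q) (Ts Tw μ ρ : ℝ) (hTs : 0 < Ts)
    (hTw : 0 < Tw) (hμ : 0 < μ) (hρ : 0 < ρ) :
    let x := μ * ρ * Ts
    Ts * x ^ Q *
        (μ * ρ * ((Ts + Tw) * Real.Gamma Q - Ts * upperGamma Q x) +
          upperGamma (Q + 1) x) +
      upperGamma (Q + 1) x * ((Ts + Tw) * Real.Gamma Q - Ts * upperGamma Q x)
      > 0 := by
  intro x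
  have hx : 0 < x := by positivity
  have hB : 0 < upperGamma (Q + 1) x := upperGamma_pos (Q + 1) (by omega) x hx.le
  have hA : 0 < (Ts + Tw) * Real.Gamma Q - Ts * upperGamma Q x := by
    have h1 : upperGamma Q x ≤ Real.Gamma Q := upperGamma_le_Gamma Q hQ x hx.le
    have hG : 0 < Real.Gamma Q :=
      Real.Gamma_pos_of_pos (by exact_mod_cast hQ)
    nlinarith
  have hxQ : 0 < x ^ Q := by positivity
  have hμρ : 0 < μ * ρ := by positivity
  nlinarith [mul_pos hB hA, mul_pos (mul_pos hTs hxQ) (mul_pos hμρ hA),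
    mul_pos (mul_pos hTs hxQ) hB]
end

section
/- Let E: [0,C] → ℝ be concave with E defined on [0,C], N ≥ 1, and X ∈ [0, N·C]. Among all vectors (x_1,…,x_N) with 0 ≤ x_i ≤ C and Σx_i = X, the total cost Σ_i E(x_i) is minimized by the water-filling allocation x_i = min(C, max(0, X - (i-1)·C)). -/
open Finset

private lemma two_point (E : ℝ → ℝ) (C : ℝ) (hC : 0 < C)
    (hconc : ConcaveOn ℝ (Set.Icc (0:ℝ) C) E)
    (a b : ℝ) (ha : a ∈ Set.Icc (0:ℝ) C) (hb : b ∈ Set.Icc (0:ℝ) C) :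
    E (max 0 (a + b - C)) + E (min C (a + b)) ≤ E a + E b := by
  obtain ⟨ha0, haC⟩ := ha
  obtain ⟨hb0, hbC⟩ := hb
  set u := max 0 (a + b - C) with hu_def
  set v := min C (a + b) with hv_def
  have huv : u + v = a + b := by
    rcases le_total (a + b) C with h | h
    · have : u = 0 := max_eq_left (by linarith)
      have hv : v = a + b := min_eq_right h
      linarith
    · have : u = a + b - C := max_eq_right (by linarith)
      have hv : v = C := min_eq_left h
      linarith
  have hu : u ∈ Set.Icc (0:ℝ) C := ⟨le_max_left _ _, max_le hC.le (by linarith)⟩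
  have hv : v ∈ Set.Icc (0:ℝ) C := ⟨le_min hC.le (by linarith), min_le_left _ _⟩
  have hua : u ≤ a := max_le ha0 (by linarith)
  have hav : a ≤ v := le_min haC (by linarith)
  rcases eq_or_lt_of_le (hua.trans hav) with heq | hlt
  · have ha' : a = u := by linarith [le_antisymm hua (heq ▸ hav), heq]
    have : a = u := le_antisymm (by linarith [heq]) hua
    have hb' : b = v := by linarith
    rw [this, hb']
  · set lam := (v - a) / (v - u) with hlam_def
    have hvu : 0 < v - u := by linarith
    have hlam0 : 0 ≤ lam := div_nonneg (by linarith) hvu.le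
    have hlam1 : lam ≤ 1 := by
      rw [div_le_one hvu]; linarith
    have hkey : lam * u + (1 - lam) * v = a := by
      have hne := hvu.ne'
      rw [hlam_def, div_mul_eq_mul_div, one_sub_div hne, div_mul_eq_mul_div, ← add_div,
        div_eq_iff hne]
      ring
    have hkey2 : (1 - lam) * u + lam * v = b := by
      have : lam * (v - u) = v - a := by rw [hlam_def, div_mul_cancel₀ _ hvu.ne']
      nlinarith [this]
    have h1 := hconc.2 hu hv hlam0 (by linarith : (0:ℝ) ≤ 1 - lam) (by ring)
    have h2 := hconc.2 hu hv (by linarith : (0:ℝ) ≤ 1 - lam) hlam0 (by ring)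
    simp only [smul_eq_mul] at h1 h2
    rw [hkey] at h1
    rw [hkey2] at h2
    linarith

private lemma min_absorb (C p q : ℝ) (hp : 0 ≤ p) : min C (p + min C q) = min C (p + q) := by
  rcases le_total q C with h | h
  · rw [min_eq_right h]
  · rw [min_eq_left h, min_eq_left (by linarith : C ≤ p + C), min_eq_left (by linarith : C ≤ p + q)]

private lemma gather (E : ℝ → ℝ) (C : ℝ) (hC : 0 < C)
    (hconc : ConcaveOn ℝ (Set.Icc (0:ℝ) C) E) :
    ∀ N : ℕ, ∀ y : Fin (N+1) → ℝ, (∀ i, y i ∈ Set.Icc (0:ℝ) C) →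
      ∃ y' : Fin (N+1) → ℝ, (∀ i, y' i ∈ Set.Icc (0:ℝ) C) ∧
        (∑ i, y' i = ∑ i, y i) ∧ y' 0 = min C (∑ i, y i) ∧
        ∑ i, E (y' i) ≤ ∑ i, E (y i) := by
  intro N
  induction N with
  | zero =>
    intro y hy
    refine ⟨y, hy, rfl, ?_, le_refl _⟩
    have : ∑ i, y i = y 0 := by simp
    rw [this, min_eq_right (hy 0).2]
  | succ N ih =>
    intro y hy
    set tail : Fin (N+1) → ℝ := fun i => y i.succ with htail
    obtain ⟨t', ht'mem, ht'sum, ht'0, ht'cost⟩ := ih tail (fun i => hy i.succ)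
    set s0 := y 0 with hs0
    set t0 := t' 0 with ht0
    have hs0m := hy 0
    have ht0m := ht'mem 0
    set a := min C (s0 + t0) with ha_def
    set b := max 0 (s0 + t0 - C) with hb_def
    have hab : a + b = s0 + t0 := by
      rcases le_total (s0 + t0) C with h | h
      · have h1 : a = s0 + t0 := min_eq_right h
        have h2 : b = 0 := max_eq_left (by linarith)
        linarith
      · have h1 : a = C := min_eq_left h
        have h2 : b = s0 + t0 - C := max_eq_right (by linarith)
        linarith
    have ham : a ∈ Set.Icc (0:ℝ) C :=
      ⟨le_min hC.le (by linarith [hs0m.1, ht0m.1]), min_le_left _ _⟩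
    have hbm : b ∈ Set.Icc (0:ℝ) C :=
      ⟨le_max_left _ _, max_le hC.le (by linarith [hs0m.2, ht0m.2])⟩
    set y' : Fin (N+1+1) → ℝ := Fin.cons a (Fin.cons b (fun i : Fin N => t' i.succ)) with hy'def
    refine ⟨y', ?_, ?_, ?_, ?_⟩
    · intro i
      refine Fin.cases ?_ (fun j => ?_) i
      · simpa [hy'def] using ham
      simp only [hy'def, Fin.cons_succ]
      refine Fin.cases hbm (fun k => ?_) j
      simp only [Fin.cons_succ]
      exact ht'mem _
    · rw [Fin.sum_univ_succ (f := y'), Fin.sum_univ_succ (f := fun i : Fin (N+1) => y' i.succ)]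
      simp only [hy'def, Fin.cons_zero, Fin.cons_succ]
      have h1 : ∑ i : Fin N, t' i.succ = (∑ i, t' i) - t0 := by
        rw [Fin.sum_univ_succ (f := t')]; ring
      rw [h1, Fin.sum_univ_succ (f := y)]
      have : ∑ i : Fin (N+1), tail i = ∑ i : Fin (N+1), y i.succ := rfl
      rw [ht'sum]
      linarith [hab]
    · simp only [hy'def, Fin.cons_zero]
      have hsum : ∑ i : Fin (N+1+1), y i = s0 + ∑ i : Fin (N+1), tail i := by
        rw [Fin.sum_univ_succ (f := y)]
      rw [hsum, ha_def, ht'0, min_absorb C s0 _ hs0m.1]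
    · rw [Fin.sum_univ_succ (f := fun i => E (y' i)),
        Fin.sum_univ_succ (f := fun i : Fin (N+1) => E (y' i.succ))]
      simp only [hy'def, Fin.cons_zero, Fin.cons_succ]
      have h1 : ∑ i : Fin N, E (t' i.succ) = (∑ i, E (t' i)) - E t0 := by
        rw [Fin.sum_univ_succ (f := fun i => E (t' i))]; ring
      rw [h1, Fin.sum_univ_succ (f := fun i => E (y i))]
      have htp := two_point E C hC hconc s0 t0 hs0m ht0m
      rw [← hb_def, ← ha_def] at htp
      have : ∑ i : Fin (N+1), E (tail i) = ∑ i : Fin (N+1), E (y i.succ) := rfl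
      linarith [ht'cost]

private lemma main_aux (E : ℝ → ℝ) (C : ℝ) (hC : 0 < C)
    (hconc : ConcaveOn ℝ (Set.Icc (0:ℝ) C) E) :
    ∀ N : ℕ, ∀ X : ℝ, X ∈ Set.Icc (0:ℝ) (((N:ℝ)+1) * C) →
      ∀ x : Fin (N+1) → ℝ, (∀ i, x i ∈ Set.Icc (0:ℝ) C) → (∑ i, x i = X) →
        ∑ i : Fin (N+1), E (min C (max 0 (X - (i : ℕ) * C))) ≤ ∑ i, E (x i) := by
  intro N
  induction N with
  | zero =>
    intro X hX x hx hsum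
    have h1 : ∑ i, x i = x 0 := by simp
    have hX0 : x 0 = X := by rw [← hsum, h1]
    have hXm : X ∈ Set.Icc (0:ℝ) C := by
      simpa [hX0] using hx 0
    have : ∑ i : Fin 1, E (min C (max 0 (X - (i:ℕ) * C))) = E X := by
      simp [max_eq_right hXm.1, min_eq_right hXm.2]
    rw [this]
    simp [hX0]
  | succ N ih =>
    intro X hX x hx hsum
    obtain ⟨x', hx'mem, hx'sum, hx'0, hx'cost⟩ := gather E C hC hconc (N+1) x hx
    rw [hsum] at hx'sum hx'0
    set m := min C X with hm_def
    set X' := X - m with hX'_def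
    have hX0 : 0 ≤ X := hX.1
    have hm_le : m ≤ X := min_le_right _ _
    have hX'mem : X' ∈ Set.Icc (0:ℝ) (((N:ℝ)+1) * C) := by
      constructor
      · linarith
      · rcases le_total X C with h | h
        · have hmX : m = X := min_eq_right h
          have h0 : (0:ℝ) ≤ ((N:ℝ)+1) * C := by positivity
          rw [hX'_def, hmX]
          linarith
        · have : m = C := min_eq_left h
          rw [hX'_def, this]
          have := hX.2
          push_cast at this ⊢
          linarith
    have htail_sum : ∑ i : Fin (N+1), x' i.succ = X' := by
      have := hx'sum
      rw [Fin.sum_univ_succ (f := x')] at this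
      rw [hX'_def, ← hx'0]
      linarith
    have hIH := ih X' hX'mem (fun i => x' i.succ) (fun i => hx'mem i.succ) htail_sum
    have hshift : ∀ i : Fin (N+1),
        min C (max 0 (X - ((i.succ : Fin (N+2)) : ℕ) * C)) = min C (max 0 (X' - (i:ℕ) * C)) := by
      intro i
      have hiv : (((i.succ : Fin (N+2)) : ℕ) : ℝ) = ((i:ℕ):ℝ) + 1 := by
        push_cast [Fin.val_succ]; ring
      rw [hiv]
      rcases le_total X C with h | h
      · have hm : m = X := min_eq_right h
        have hX'0 : X' = 0 := by rw [hX'_def, hm]; ring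
        have hiC : (0:ℝ) ≤ ((i:ℕ):ℝ) * C := by positivity
        have h1 : X - (((i:ℕ):ℝ) + 1) * C ≤ 0 := by nlinarith
        have h2 : X' - ((i:ℕ):ℝ) * C ≤ 0 := by rw [hX'0]; linarith
        rw [max_eq_left h1, max_eq_left h2]
      · have hm : m = C := min_eq_left h
        rw [show X - (((i:ℕ):ℝ) + 1) * C = X' - ((i:ℕ):ℝ) * C by rw [hX'_def, hm]; ring]
    have hw0 : min C (max 0 (X - ((0 : Fin (N+2)):ℕ) * C)) = m := by
      simp [max_eq_right hX0, hm_def]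
    calc ∑ i : Fin (N+2), E (min C (max 0 (X - (i:ℕ) * C)))
        = E m + ∑ i : Fin (N+1), E (min C (max 0 (X' - (i:ℕ) * C))) := by
          rw [Fin.sum_univ_succ (f := fun i : Fin (N+2) => E (min C (max 0 (X - (i:ℕ) * C))))]
          rw [hw0]
          congr 1
          exact Finset.sum_congr rfl (fun i _ => by rw [hshift i])
      _ ≤ E m + ∑ i : Fin (N+1), E (x' i.succ) := by linarith [hIH]
      _ = ∑ i, E (x' i) := by
          rw [Fin.sum_univ_succ (f := fun i => E (x' i)), hx'0]
      _ ≤ ∑ i, E (x i) := hx'cost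

theorem stmt_12 (E : ℝ → ℝ) (C X : ℝ) (N : ℕ) (hN : 1 ≤ N) (hC : 0 < C)
    (hconc : ConcaveOn ℝ (Set.Icc (0:ℝ) C) E)
    (hX : X ∈ Set.Icc (0:ℝ) ((N : ℝ) * C)) :
    ∀ x : Fin N → ℝ, (∀ i, x i ∈ Set.Icc (0:ℝ) C) → (∑ i, x i = X) →
      ∑ i : Fin N, E (min C (max 0 (X - (i : ℕ) * C))) ≤ ∑ i, E (x i) := by
  obtain ⟨M, rfl⟩ : ∃ M, N = M + 1 := ⟨N - 1, (Nat.succ_pred_eq_of_pos hN).symm⟩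
  intro x hx hsum
  have hX' : X ∈ Set.Icc (0:ℝ) (((M:ℝ)+1) * C) := by
    convert hX using 2
    push_cast
    ring
  exact main_aux E C hC hconc M X hX' x hx hsum
end
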